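/- arXiv:math-ph/0406065 — 4 statements merged into one kernel-verified Lean document; each statement's English description precedes it below -/
import Mathlib

section
/- Let $n \ge 1$ and let $H, P$ be Hermitian $n \times n$ complex matrices. Then $\left| \log \operatorname{tr}\left( e^{H+P} \right) - \log \operatorname{tr}\left( e^{H} \right) \right| \le \| P \|$. -/
open scoped Matrix.Norms.L2Operator

section Aux

open Matrix NormedSpace

local notation "⟪" x ", " y "⟫" => inner (𝕜 := ℂ) x y

/-- The matrix exponential of a Hermitian matrix acts on its eigenvectors by scaling with the
exponential of the eigenvalue. -/
private lemma exp_mulVec_eigenvectorBasis {n : ℕ} {M : Matrix (Fin n) (Fin n) ℂ}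
    (hM : M.IsHermitian) (j : Fin n) :
    exp M *ᵥ ⇑(hM.eigenvectorBasis j)
      = (Real.exp (hM.eigenvalues j) : ℂ) • ⇑(hM.eigenvectorBasis j) := by
  have hU1 : (hM.eigenvectorUnitary : Matrix (Fin n) (Fin n) ℂ) *
      star (hM.eigenvectorUnitary : Matrix (Fin n) (Fin n) ℂ) = 1 :=
    (Matrix.mem_unitaryGroup_iff).mp hM.eigenvectorUnitary.2
  have hUinv : (hM.eigenvectorUnitary : Matrix (Fin n) (Fin n) ℂ)⁻¹ =
      star (hM.eigenvectorUnitary : Matrix (Fin n) (Fin n) ℂ) := inv_eq_right_inv hU1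
  have hUunit : IsUnit (hM.eigenvectorUnitary : Matrix (Fin n) (Fin n) ℂ) :=
    (Matrix.isUnit_iff_isUnit_det _).mpr (Matrix.isUnit_det_of_right_inverse hU1)
  have hexp : exp M = (hM.eigenvectorUnitary : Matrix (Fin n) (Fin n) ℂ) *
      diagonal (fun j => (Real.exp (hM.eigenvalues j) : ℂ)) *
      star (hM.eigenvectorUnitary : Matrix (Fin n) (Fin n) ℂ) := by
    conv_lhs => rw [hM.spectral_theorem, Unitary.conjStarAlgAut_apply, ← hUinv, Matrix.exp_conj _ _ hUunit, hUinv, exp_diagonal]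
    congr 2
    funext j
    simp [Pi.exp_def, ← Complex.exp_eq_exp_ℂ, Complex.ofReal_exp]
  rw [hexp, ← Matrix.mulVec_mulVec, ← Matrix.mulVec_mulVec,
    hM.star_eigenvectorUnitary_mulVec, diagonal_mulVec_single,
    show Pi.single j ((Real.exp (hM.eigenvalues j) : ℂ) * 1)
      = (Real.exp (hM.eigenvalues j) : ℂ) • (Pi.single j 1 : Fin n → ℂ) by
        ext k; by_cases h : k = j <;> simp [h, Pi.single_apply],
    mulVec_smul, hM.eigenvectorUnitary_mulVec]

/-- Real part of the trace of the exponential of a Hermitian matrix. -/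
private lemma trace_exp_re {n : ℕ} {M : Matrix (Fin n) (Fin n) ℂ} (hM : M.IsHermitian) :
    (Matrix.trace (exp M)).re = ∑ i, Real.exp (hM.eigenvalues i) := by
  have hU1 : (hM.eigenvectorUnitary : Matrix (Fin n) (Fin n) ℂ) *
      star (hM.eigenvectorUnitary : Matrix (Fin n) (Fin n) ℂ) = 1 :=
    (Matrix.mem_unitaryGroup_iff).mp hM.eigenvectorUnitary.2
  have hUinv : (hM.eigenvectorUnitary : Matrix (Fin n) (Fin n) ℂ)⁻¹ =
      star (hM.eigenvectorUnitary : Matrix (Fin n) (Fin n) ℂ) := inv_eq_right_inv hU1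
  have hUunit : IsUnit (hM.eigenvectorUnitary : Matrix (Fin n) (Fin n) ℂ) :=
    (Matrix.isUnit_iff_isUnit_det _).mpr (Matrix.isUnit_det_of_right_inverse hU1)
  have hexp : exp M = (hM.eigenvectorUnitary : Matrix (Fin n) (Fin n) ℂ) *
      diagonal (fun j => (Real.exp (hM.eigenvalues j) : ℂ)) *
      star (hM.eigenvectorUnitary : Matrix (Fin n) (Fin n) ℂ) := by
    conv_lhs => rw [hM.spectral_theorem, Unitary.conjStarAlgAut_apply, ← hUinv, Matrix.exp_conj _ _ hUunit, hUinv, exp_diagonal]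
    congr 2
    funext j
    simp [Pi.exp_def, ← Complex.exp_eq_exp_ℂ, Complex.ofReal_exp]
  rw [hexp, ← hUinv, Matrix.trace_mul_cycle,
    Matrix.nonsing_inv_mul _ ((Matrix.isUnit_iff_isUnit_det _).mp hUunit), Matrix.one_mul,
    Matrix.trace_diagonal]
  simp [Complex.re_sum, ← Complex.ofReal_exp]

/-- Quadratic form of a Hermitian matrix in terms of an eigenbasis. -/
private lemma quadform_eq {n : ℕ} {M : Matrix (Fin n) (Fin n) ℂ} (hM : Mᴴ = M)
    (v : OrthonormalBasis (Fin n) ℂ (EuclideanSpace ℂ (Fin n))) (ν : Fin n → ℝ)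
    (hv : ∀ j, M *ᵥ ⇑(v j) = (ν j : ℂ) • ⇑(v j)) (x : EuclideanSpace ℂ (Fin n)) :
    star ⇑x ⬝ᵥ (M *ᵥ ⇑x) = ∑ j, (ν j : ℂ) * ((‖⟪v j, x⟫‖ : ℝ) : ℂ)^2 := by
  have key : ∀ j, ⟪v j, ((EuclideanSpace.equiv (Fin n) ℂ).symm (M *ᵥ ⇑x))⟫
      = (ν j : ℂ) * ⟪v j, x⟫ := by
    intro j
    have h1 : star ⇑(v j) ᵥ* M = (ν j : ℂ) • star ⇑(v j) := by
      have := congrArg star (hv j)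
      rw [star_mulVec, hM] at this
      rw [this, star_smul]
      congr 1
      simp [Complex.star_def, Complex.conj_ofReal]
    have h2 : ⇑((EuclideanSpace.equiv (Fin n) ℂ).symm (M *ᵥ ⇑x))
        = M *ᵥ ⇑x := rfl
    rw [EuclideanSpace.inner_eq_star_dotProduct, dotProduct_comm, h2, dotProduct_mulVec, h1,
      smul_dotProduct, dotProduct_comm, ← EuclideanSpace.inner_eq_star_dotProduct]
    rfl
  have hsum := v.sum_inner_mul_inner x ((EuclideanSpace.equiv (Fin n) ℂ).symm (M *ᵥ ⇑x))
  have h0 : star ⇑x ⬝ᵥ (M *ᵥ ⇑x)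
      = ⟪x, ((EuclideanSpace.equiv (Fin n) ℂ).symm (M *ᵥ ⇑x))⟫ := by
    rw [EuclideanSpace.inner_eq_star_dotProduct]; exact dotProduct_comm _ _
  rw [h0, ← hsum]
  refine Finset.sum_congr rfl fun j _ => ?_
  rw [key j, ← inner_conj_symm x (v j)]
  rw [show (starRingEnd ℂ) ⟪v j, x⟫ * ((ν j : ℂ) * ⟪v j, x⟫)
      = (ν j : ℂ) * ((starRingEnd ℂ) ⟪v j, x⟫ * ⟪v j, x⟫) by ring, RCLike.conj_mul]
  rfl

/-- Parseval's identity for an orthonormal basis of Euclidean space. -/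
private lemma parseval {n : ℕ} (v : OrthonormalBasis (Fin n) ℂ (EuclideanSpace ℂ (Fin n)))
    (x : EuclideanSpace ℂ (Fin n)) :
    ∑ j, ‖⟪v j, x⟫‖^2 = ‖x‖^2 := by
  have h := v.sum_inner_mul_inner x x
  have h2 : ∀ j, ⟪x, v j⟫ * ⟪v j, x⟫ = ((‖⟪v j, x⟫‖^2 : ℝ) : ℂ) := by
    intro j
    rw [← inner_conj_symm x (v j), RCLike.conj_mul]
    norm_cast
  rw [Finset.sum_congr rfl fun j _ => h2 j, inner_self_eq_norm_sq_to_K] at h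
  simpa [Complex.re_sum, ← Complex.ofReal_pow] using congrArg Complex.re h

/-- Quadratic form bound by the operator norm, for unit vectors. -/
private lemma re_quadform_le_opNorm {n : ℕ} (P : Matrix (Fin n) (Fin n) ℂ)
    (x : EuclideanSpace ℂ (Fin n)) (hx : ‖x‖ = 1) :
    (star ⇑x ⬝ᵥ (P *ᵥ ⇑x)).re ≤ ‖P‖ := by
  have h0 : star ⇑x ⬝ᵥ (P *ᵥ ⇑x)
      = ⟪x, ((EuclideanSpace.equiv (Fin n) ℂ).symm (P *ᵥ ⇑x))⟫ := by
    rw [EuclideanSpace.inner_eq_star_dotProduct]; exact dotProduct_comm _ _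
  calc (star ⇑x ⬝ᵥ (P *ᵥ ⇑x)).re ≤ ‖star ⇑x ⬝ᵥ (P *ᵥ ⇑x)‖ := Complex.re_le_norm _
    _ = ‖⟪x, ((EuclideanSpace.equiv (Fin n) ℂ).symm (P *ᵥ ⇑x))⟫‖ := by rw [h0]
    _ ≤ ‖x‖ * ‖(EuclideanSpace.equiv (Fin n) ℂ).symm (P *ᵥ ⇑x)‖ := norm_inner_le_norm _ _
    _ ≤ ‖x‖ * (‖P‖ * ‖x‖) := by
        refine mul_le_mul_of_nonneg_left ?_ (norm_nonneg _)
        exact P.l2_opNorm_mulVec x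
    _ = ‖P‖ := by rw [hx]; ring

/-- The key one-sided inequality: `tr e^{H+P} ≤ e^{‖P‖} tr e^H`. -/
private lemma trace_exp_add_le {n : ℕ} (H P : Matrix (Fin n) (Fin n) ℂ)
    (hH : H.IsHermitian) (hP : P.IsHermitian) :
    (Matrix.trace (exp (H + P))).re ≤ Real.exp ‖P‖ * (Matrix.trace (exp H)).re := by
  have hA : (H + P).IsHermitian := hH.add hP
  set u := hA.eigenvectorBasis with hu
  set v := hH.eigenvectorBasis with hv
  set μ := hA.eigenvalues with hμ
  set lam := hH.eigenvalues with hlam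
  set w : Fin n → Fin n → ℝ := fun i j => ‖⟪v j, u i⟫‖^2 with hwdef
  have hunorm : ∀ i, ‖u i‖ = 1 := fun i => u.orthonormal.1 i
  have hvnorm : ∀ j, ‖v j‖ = 1 := fun j => v.orthonormal.1 j
  have hw0 : ∀ i j, 0 ≤ w i j := fun i j => sq_nonneg _
  have hwsum : ∀ i, ∑ j, w i j = 1 := by
    intro i
    rw [hwdef]
    simp only
    rw [parseval v (u i), hunorm i, one_pow]
  have hwsum' : ∀ j, ∑ i, w i j = 1 := by
    intro j
    have : ∀ i, w i j = ‖⟪u i, v j⟫‖^2 := by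
      intro i
      rw [hwdef]
      simp only
      rw [← inner_conj_symm (v j) (u i), RCLike.norm_conj]
    rw [Finset.sum_congr rfl fun i _ => this i, parseval u (v j), hvnorm j, one_pow]
  -- each eigenvalue of H + P is bounded
  have step1 : ∀ i, μ i ≤ (∑ j, lam j * w i j) + ‖P‖ := by
    intro i
    have hμeq : ((μ i : ℂ)) = star ⇑(u i) ⬝ᵥ ((H + P) *ᵥ ⇑(u i)) := by
      rw [hA.mulVec_eigenvectorBasis]
      have hne : star ⇑(u i) ⬝ᵥ ⇑(u i) = (1 : ℂ) := by
        rw [dotProduct_comm, ← EuclideanSpace.inner_eq_star_dotProduct]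
        rw [show (⟪u i, u i⟫ : ℂ) = ((‖u i‖ : ℂ))^2 from inner_self_eq_norm_sq_to_K _]
        rw [hunorm i]
        norm_num
      rw [dotProduct_smul, hne]
      simp [hμ, Complex.real_smul]
    have hsplit : star ⇑(u i) ⬝ᵥ ((H + P) *ᵥ ⇑(u i))
        = star ⇑(u i) ⬝ᵥ (H *ᵥ ⇑(u i)) + star ⇑(u i) ⬝ᵥ (P *ᵥ ⇑(u i)) := by
      rw [Matrix.add_mulVec, dotProduct_add]
    have hHpart : (star ⇑(u i) ⬝ᵥ (H *ᵥ ⇑(u i))).re = ∑ j, lam j * w i j := by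
      rw [quadform_eq hH v lam (fun j => hH.mulVec_eigenvectorBasis j) (u i)]
      rw [Complex.re_sum]
      refine Finset.sum_congr rfl fun j _ => ?_
      rw [hwdef]
      simp [← Complex.ofReal_pow]
    have hPpart : (star ⇑(u i) ⬝ᵥ (P *ᵥ ⇑(u i))).re ≤ ‖P‖ :=
      re_quadform_le_opNorm P (u i) (hunorm i)
    have : μ i = (star ⇑(u i) ⬝ᵥ (H *ᵥ ⇑(u i))).re + (star ⇑(u i) ⬝ᵥ (P *ᵥ ⇑(u i))).re := by
      have := congrArg Complex.re (hμeq.trans hsplit)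
      simpa [Complex.add_re] using this
    rw [this, hHpart]
    exact add_le_add_right hPpart _
  -- Jensen's inequality for each i
  have step2 : ∀ i, Real.exp (∑ j, lam j * w i j) ≤ ∑ j, w i j * Real.exp (lam j) := by
    intro i
    have := convexOn_exp.map_sum_le (t := Finset.univ) (w := w i) (p := lam)
      (fun j _ => hw0 i j) (hwsum i) (fun j _ => Set.mem_univ _)
    calc Real.exp (∑ j, lam j * w i j) = Real.exp (∑ j, w i j • lam j) := by
          congr 1; exact Finset.sum_congr rfl fun j _ => by rw [smul_eq_mul, mul_comm]
      _ ≤ ∑ j, w i j • Real.exp (lam j) := this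
      _ = ∑ j, w i j * Real.exp (lam j) := by simp [smul_eq_mul]
  rw [trace_exp_re hA, trace_exp_re hH]
  calc ∑ i, Real.exp (μ i)
      ≤ ∑ i, Real.exp ‖P‖ * (∑ j, w i j * Real.exp (lam j)) := by
        refine Finset.sum_le_sum fun i _ => ?_
        calc Real.exp (μ i) ≤ Real.exp ((∑ j, lam j * w i j) + ‖P‖) :=
              Real.exp_le_exp.mpr (step1 i)
          _ = Real.exp ‖P‖ * Real.exp (∑ j, lam j * w i j) := by
              rw [Real.exp_add]; ring
          _ ≤ Real.exp ‖P‖ * (∑ j, w i j * Real.exp (lam j)) :=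
              mul_le_mul_of_nonneg_left (step2 i) (Real.exp_pos _).le
    _ = Real.exp ‖P‖ * ∑ i, Real.exp (lam i) := by
        rw [← Finset.mul_sum]
        congr 1
        rw [Finset.sum_comm]
        refine Finset.sum_congr rfl fun j _ => ?_
        rw [← Finset.sum_mul, hwsum' j, one_mul]

private lemma trace_exp_pos {n : ℕ} (hn : 1 ≤ n) {M : Matrix (Fin n) (Fin n) ℂ}
    (hM : M.IsHermitian) : 0 < (Matrix.trace (exp M)).re := by
  rw [trace_exp_re hM]
  have : Nonempty (Fin n) := ⟨⟨0, hn⟩⟩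
  exact Finset.sum_pos (fun i _ => Real.exp_pos _) Finset.univ_nonempty

end Aux

/-- **Part 1 of Lemma 3.3**: for Hermitian `n × n` complex matrices `H, P` (with `n ≥ 1`),
`|log tr(e^{H+P}) - log tr(e^H)| ≤ ‖P‖`, where `‖·‖` is the operator norm on `ℂ^n`. -/
theorem log_trace_exp_perturb_bound {n : ℕ} (hn : 1 ≤ n)
    (H P : Matrix (Fin n) (Fin n) ℂ) (hH : H.IsHermitian) (hP : P.IsHermitian) :
    |Real.log (Matrix.trace (NormedSpace.exp (H + P))).re -
      Real.log (Matrix.trace (NormedSpace.exp H)).re| ≤ ‖P‖ := by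
  have hx : 0 < (Matrix.trace (NormedSpace.exp (H + P))).re := trace_exp_pos hn (hH.add hP)
  have hy : 0 < (Matrix.trace (NormedSpace.exp H)).re := trace_exp_pos hn hH
  have h1 := trace_exp_add_le H P hH hP
  have h2 := trace_exp_add_le (H + P) (-P) (hH.add hP) hP.neg
  rw [add_neg_cancel_right, norm_neg] at h2
  have k1 : Real.log (Matrix.trace (NormedSpace.exp (H + P))).re
      ≤ ‖P‖ + Real.log (Matrix.trace (NormedSpace.exp H)).re := by
    calc Real.log (Matrix.trace (NormedSpace.exp (H + P))).re
        ≤ Real.log (Real.exp ‖P‖ * (Matrix.trace (NormedSpace.exp H)).re) :=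
          Real.log_le_log hx h1
      _ = ‖P‖ + Real.log (Matrix.trace (NormedSpace.exp H)).re := by
          rw [Real.log_mul (Real.exp_pos _).ne' hy.ne', Real.log_exp]
  have k2 : Real.log (Matrix.trace (NormedSpace.exp H)).re
      ≤ ‖P‖ + Real.log (Matrix.trace (NormedSpace.exp (H + P))).re := by
    calc Real.log (Matrix.trace (NormedSpace.exp H)).re
        ≤ Real.log (Real.exp ‖P‖ * (Matrix.trace (NormedSpace.exp (H + P))).re) :=
          Real.log_le_log hy h2
      _ = ‖P‖ + Real.log (Matrix.trace (NormedSpace.exp (H + P))).re := by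
          rw [Real.log_mul (Real.exp_pos _).ne' hx.ne', Real.log_exp]
  rw [abs_le]
  constructor <;> [linarith; linarith]
end

section
/- Let $n \ge 1$ and let $H, P$ be Hermitian $n \times n$ complex matrices. Then the function $t \mapsto \log \operatorname{tr}\left( e^{H+tP} \right)$ is differentiable on $\mathbb{R}$, and for every $t \in \mathbb{R}$ its derivative equals $\operatorname{tr}\left( P \, e^{H+tP} \right) / \operatorname{tr}\left( e^{H+tP} \right)$. -/
open NormedSpace Matrix

-- positivity lemma
private lemma trace_exp_re_pos {n : ℕ} (hn : 1 ≤ n)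
    (A : Matrix (Fin n) (Fin n) ℂ) (hA : A.IsHermitian) :
    0 < (Matrix.trace (exp A)).re := by
  have hne : Nonempty (Fin n) := ⟨⟨0, hn⟩⟩
  set B := exp ((1/2 : ℝ) • A) with hBdef
  have hAh : ((1/2 : ℝ) • A).IsHermitian := by
    unfold Matrix.IsHermitian
    rw [Matrix.conjTranspose_smul, star_trivial, hA]
  have hB : B.IsHermitian := hAh.exp
  have hsplit : exp A = B * B := by
    have h1 : A = (1/2 : ℝ) • A + (1/2 : ℝ) • A := by
      rw [← add_smul]; norm_num
    rw [hBdef, ← Matrix.exp_add_of_commute _ _ (Commute.refl _), ← h1]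
  have hBne : B ≠ 0 := by
    intro h
    have := Matrix.isUnit_exp ((1/2 : ℝ) • A)
    rw [← hBdef, h] at this
    exact not_isUnit_zero this
  obtain ⟨i, hi⟩ : ∃ i, B i ≠ 0 := by
    by_contra h
    push_neg at h
    exact hBne (funext h)
  obtain ⟨j, hj⟩ : ∃ j, B i j ≠ 0 := by
    by_contra h
    push_neg at h
    exact hi (funext h)
  have hentry : (Matrix.trace (exp A)).re = ∑ a, ∑ b, Complex.normSq (B a b) := by
    rw [hsplit]
    nth_rewrite 2 [← hB]
    simp only [Matrix.trace, Matrix.diag, Matrix.mul_apply, Matrix.conjTranspose_apply,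
      Complex.mul_conj]
    rw [Complex.re_sum]
    refine Finset.sum_congr rfl fun a _ => ?_
    rw [Complex.re_sum]
    refine Finset.sum_congr rfl fun b _ => ?_
    simp [Complex.normSq_apply]
  rw [hentry]
  have hnn : ∀ a ∈ Finset.univ, (0:ℝ) ≤ ∑ b, Complex.normSq (B a b) :=
    fun a _ => Finset.sum_nonneg fun b _ => Complex.normSq_nonneg _
  refine Finset.sum_pos' hnn ⟨i, Finset.mem_univ _, ?_⟩
  refine Finset.sum_pos' (fun b _ => Complex.normSq_nonneg _) ⟨j, Finset.mem_univ _, ?_⟩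
  exact Complex.normSq_pos.2 hj

private lemma hasDerivAt_trace_exp_aux {n : ℕ}
    (H P : Matrix (Fin n) (Fin n) ℂ) (t : ℝ) :
    HasDerivAt (fun y : ℝ => Matrix.trace (exp (H + y • P)))
      (Matrix.trace (P * exp (H + t • P))) t := by
  letI : SeminormedRing (Matrix (Fin n) (Fin n) ℂ) := Matrix.linftyOpSemiNormedRing
  letI : NormedRing (Matrix (Fin n) (Fin n) ℂ) := Matrix.linftyOpNormedRing
  letI : NormedAlgebra ℝ (Matrix (Fin n) (Fin n) ℂ) := Matrix.linftyOpNormedAlgebra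
  letI : NormedAlgebra ℂ (Matrix (Fin n) (Fin n) ℂ) := Matrix.linftyOpNormedAlgebra
  letI : TopologicalSpace (Matrix (Fin n) (Fin n) ℂ) :=
    UniformSpace.toTopologicalSpace (self := PseudoMetricSpace.toUniformSpace)
  -- trace as a continuous linear map
  set T : Matrix (Fin n) (Fin n) ℂ →L[ℂ] ℂ :=
    LinearMap.toContinuousLinearMap (Matrix.traceLinearMap (Fin n) ℂ ℂ) with hT
  have hTapp : ∀ X : Matrix (Fin n) (Fin n) ℂ, T X = Matrix.trace X := fun X => rfl
  -- curve
  set M : ℝ → Matrix (Fin n) (Fin n) ℂ := fun y => H + y • P with hMdef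
  have hM : ∀ y : ℝ, HasDerivAt M P y := by
    intro y
    have := ((hasDerivAt_id y).smul_const P).const_add H
    simpa [hMdef] using this
  -- derivative of powers
  set C : ℕ → ℝ → Matrix (Fin n) (Fin n) ℂ := fun k y =>
    ∑ j ∈ Finset.range k, (M y) ^ j * P * (M y) ^ (k - 1 - j) with hCdef
  have hpow : ∀ (k : ℕ) (y : ℝ), HasDerivAt (fun z => (M z) ^ k) (C k y) y := by
    intro k
    induction k with
    | zero =>
      intro y
      simpa [hCdef] using (hasDerivAt_const y (1 : Matrix (Fin n) (Fin n) ℂ))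
    | succ k ih =>
      intro y
      have h := (ih y).mul (hM y)
      have heq : C (k + 1) y = C k y * M y + (M y) ^ k * P := by
        simp only [hCdef, Finset.sum_range_succ, Finset.sum_mul]
        rw [Nat.add_sub_cancel, Nat.sub_self, pow_zero, mul_one]
        congr 1
        refine Finset.sum_congr rfl fun j hj => ?_
        have hjk : j < k := Finset.mem_range.1 hj
        have h2 : k - j = k - 1 - j + 1 := by omega
        rw [h2, pow_succ, ← mul_assoc]
      rw [heq]
      have hfun : (fun z => M z ^ (k + 1)) = fun z => M z ^ k * M z := by
        funext z; rw [pow_succ]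
      rw [hfun]
      exact h
  have htraceC : ∀ (k : ℕ) (y : ℝ),
      Matrix.trace (C k y) = (k : ℂ) * Matrix.trace (P * (M y) ^ (k - 1)) := by
    intro k y
    rw [hCdef]
    simp only [Matrix.trace_sum]
    have hterm : ∀ j ∈ Finset.range k,
        Matrix.trace ((M y) ^ j * P * (M y) ^ (k - 1 - j))
          = Matrix.trace (P * (M y) ^ (k - 1)) := by
      intro j hj
      have hjk := Finset.mem_range.1 hj
      have h2 : k - 1 - j + j = k - 1 := by omega
      rw [Matrix.trace_mul_cycle, ← pow_add, h2, Matrix.trace_mul_comm]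
    rw [Finset.sum_congr rfl hterm, Finset.sum_const, Finset.card_range, nsmul_eq_mul]
  -- the series of functions and its derivative
  set g : ℕ → ℝ → ℂ := fun k y => ((k.factorial : ℂ))⁻¹ • Matrix.trace ((M y) ^ k) with hgdef
  set g' : ℕ → ℝ → ℂ := fun k y =>
    ((k.factorial : ℂ))⁻¹ • ((k : ℂ) * Matrix.trace (P * (M y) ^ (k - 1))) with hg'def
  have hg : ∀ (k : ℕ) (y : ℝ), HasDerivAt (g k) (g' k y) y := by
    intro k y
    have h1 : HasDerivAt (fun z => Matrix.trace ((M z) ^ k)) (Matrix.trace (C k y)) y := by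
      have := ((T.restrictScalars ℝ).hasFDerivAt
        (x := (M y) ^ k)).comp_hasDerivAt y (hpow k y)
      exact this
    have h2 := h1.const_smul ((k.factorial : ℂ))⁻¹
    rw [htraceC k y] at h2
    exact h2
  -- sums identification
  have hgsum : ∀ y : ℝ, HasSum (fun k => g k y) (Matrix.trace (exp (M y))) := by
    intro y
    have h := (NormedSpace.exp_series_hasSum_exp' (𝕂 := ℂ) (M y)).mapL T
    have heq : (fun k => T (((k.factorial : ℂ))⁻¹ • (M y) ^ k)) = fun k => g k y := by
      funext k
      rw [_root_.map_smul, hTapp, hgdef]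
    rwa [heq, hTapp] at h
  -- trace (P * ·) as a continuous linear map
  set L : Matrix (Fin n) (Fin n) ℂ →L[ℂ] ℂ :=
    T.comp (ContinuousLinearMap.mul ℂ (Matrix (Fin n) (Fin n) ℂ) P) with hLdef
  have hLapp : ∀ X : Matrix (Fin n) (Fin n) ℂ, L X = Matrix.trace (P * X) := fun X => rfl
  -- simplification of the derivative terms
  have hg'eq : ∀ (k : ℕ) (y : ℝ),
      g' (k + 1) y = ((k.factorial : ℂ))⁻¹ • Matrix.trace (P * (M y) ^ k) := by
    intro k y
    have hfac : ((Nat.factorial (k + 1) : ℂ)) = ((k : ℂ) + 1) * (Nat.factorial k : ℂ) := by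
      push_cast [Nat.factorial_succ]; ring
    have hk0 : ((k : ℂ) + 1) ≠ 0 := Nat.cast_add_one_ne_zero k
    have hf0 : ((Nat.factorial k : ℂ)) ≠ 0 := Nat.cast_ne_zero.2 (Nat.factorial_ne_zero k)
    simp only [hg'def, smul_eq_mul, Nat.add_sub_cancel]
    rw [hfac]
    push_cast
    field_simp
  have hg'0 : ∀ y : ℝ, g' 0 y = 0 := by
    intro y; simp [hg'def]
  -- sum of the derivative series
  have hg'sum : HasSum (fun k => g' k t) (Matrix.trace (P * exp (M t))) := by
    have h := (NormedSpace.exp_series_hasSum_exp' (𝕂 := ℂ) (M t)).mapL L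
    have h1 : HasSum (fun k => g' (k + 1) t) (Matrix.trace (P * exp (M t))) := by
      have heq : (fun k => L (((k.factorial : ℂ))⁻¹ • (M t) ^ k)) = fun k => g' (k + 1) t := by
        funext k
        rw [_root_.map_smul, hLapp, hg'eq]
      rwa [heq, hLapp] at h
    have h2 := (hasSum_nat_add_iff (f := fun k => g' k t) 1).1 h1
    simpa [hg'0] using h2
  -- the uniform bound on an interval around t
  set R : ℝ := ‖H‖ + (|t| + 1) * ‖P‖ with hRdef
  have hMbound : ∀ y ∈ Set.Ioo (t - 1) (t + 1), ‖M y‖ ≤ R := by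
    intro y hy
    have h1 : ‖M y‖ ≤ ‖H‖ + ‖y • P‖ := norm_add_le _ _
    rw [norm_smul, Real.norm_eq_abs] at h1
    have h2 : |y| ≤ |t| + 1 := by
      rcases hy with ⟨h3, h4⟩
      rw [abs_le]
      rcases abs_le.1 (le_refl |t|) with ⟨h5, h6⟩
      constructor <;> linarith
    have h3 : |y| * ‖P‖ ≤ (|t| + 1) * ‖P‖ :=
      mul_le_mul_of_nonneg_right h2 (norm_nonneg P)
    rw [hRdef]; linarith
  have hR0 : 0 ≤ R := by
    have h1 : (0:ℝ) ≤ ‖H‖ := norm_nonneg _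
    have h2 : (0:ℝ) ≤ (|t| + 1) * ‖P‖ :=
      mul_nonneg (by positivity) (norm_nonneg _)
    rw [hRdef]; linarith
  set u : ℕ → ℝ := fun k =>
    Nat.casesOn k 0 (fun m => ‖T‖ * ‖P‖ * R ^ m / m.factorial) with hudef
  have hu : Summable u := by
    rw [← summable_nat_add_iff 1]
    have := (Real.summable_pow_div_factorial R).mul_left (‖T‖ * ‖P‖)
    simpa [hudef, mul_div_assoc] using this
  have hbound : ∀ (k : ℕ), ∀ y ∈ Set.Ioo (t - 1) (t + 1), ‖g' k y‖ ≤ u k := by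
    intro k y hy
    cases k with
    | zero => simp [hg'0, hudef]
    | succ k =>
      rw [hg'eq, norm_smul]
      have hPM : ‖P * (M y) ^ k‖ ≤ ‖P‖ * R ^ k := by
        cases Nat.eq_zero_or_pos k with
        | inl h0 =>
          subst h0; simpa using le_refl ‖P‖
        | inr hpos =>
          calc ‖P * (M y) ^ k‖ ≤ ‖P‖ * ‖(M y) ^ k‖ := norm_mul_le _ _
            _ ≤ ‖P‖ * ‖M y‖ ^ k := by
                exact mul_le_mul_of_nonneg_left (norm_pow_le' _ hpos) (norm_nonneg _)
            _ ≤ ‖P‖ * R ^ k := by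
                exact mul_le_mul_of_nonneg_left
                  (pow_le_pow_left₀ (norm_nonneg _) (hMbound y hy) k) (norm_nonneg _)
      have htr : ‖Matrix.trace (P * (M y) ^ k)‖ ≤ ‖T‖ * (‖P‖ * R ^ k) := by
        calc ‖Matrix.trace (P * (M y) ^ k)‖ = ‖T (P * (M y) ^ k)‖ := by rw [hTapp]
          _ ≤ ‖T‖ * ‖P * (M y) ^ k‖ := T.le_opNorm _
          _ ≤ ‖T‖ * (‖P‖ * R ^ k) := mul_le_mul_of_nonneg_left hPM (norm_nonneg _)
      have hninv : ‖((k.factorial : ℂ))⁻¹‖ = ((k.factorial : ℝ))⁻¹ := by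
        rw [norm_inv]
        simp [Complex.norm_natCast]
      rw [hninv, hudef]
      have hfpos : (0:ℝ) < (k.factorial : ℝ) := by positivity
      calc ((k.factorial : ℝ))⁻¹ * ‖Matrix.trace (P * (M y) ^ k)‖
          ≤ ((k.factorial : ℝ))⁻¹ * (‖T‖ * (‖P‖ * R ^ k)) :=
            mul_le_mul_of_nonneg_left htr (by positivity)
        _ = ‖T‖ * ‖P‖ * R ^ k / (k.factorial : ℝ) := by field_simp
  -- apply the term-by-term differentiation theorem
  have htmem : t ∈ Set.Ioo (t - 1) (t + 1) := by constructor <;> linarith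
  have hmain := hasDerivAt_tsum_of_isPreconnected hu (isOpen_Ioo (a := t - 1) (b := t + 1))
    (isPreconnected_Ioo) (fun k y _ => hg k y) hbound htmem ((hgsum t).summable) htmem
  have hfun : (fun z : ℝ => ∑' k, g k z) = fun z => Matrix.trace (exp (M z)) :=
    funext fun z => (hgsum z).tsum_eq
  rw [hfun, hg'sum.tsum_eq] at hmain
  exact hmain

/-- For Hermitian `H, P`, the function `t ↦ log tr(e^{H+tP})` is differentiable on `ℝ`
with derivative `tr(P e^{H+tP}) / tr(e^{H+tP})` at every `t`. -/
theorem hasDerivAt_log_trace_exp {n : ℕ} (hn : 1 ≤ n)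
    (H P : Matrix (Fin n) (Fin n) ℂ) (hH : H.IsHermitian) (hP : P.IsHermitian) (t : ℝ) :
    HasDerivAt (fun t : ℝ => Real.log (Matrix.trace (NormedSpace.exp (H + t • P))).re)
      ((Matrix.trace (P * NormedSpace.exp (H + t • P))).re /
        (Matrix.trace (NormedSpace.exp (H + t • P))).re) t := by
  have hF := hasDerivAt_trace_exp_aux H P t
  have hre : HasDerivAt (fun y : ℝ => (Matrix.trace (NormedSpace.exp (H + y • P))).re)
      ((Matrix.trace (P * NormedSpace.exp (H + t • P))).re) t := by
    have := (Complex.reCLM.hasFDerivAt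
      (x := Matrix.trace (NormedSpace.exp (H + t • P)))).comp_hasDerivAt t hF
    exact this
  have hherm : (H + t • P).IsHermitian := by
    have h1 : (t • P).IsHermitian := by
      unfold Matrix.IsHermitian
      rw [Matrix.conjTranspose_smul, star_trivial, hP]
    exact hH.add h1
  have hpos := trace_exp_re_pos hn (H + t • P) hherm
  exact hre.log (ne_of_gt hpos)
end

section
/- Let $n \ge 1$, let $H, P$ be Hermitian $n \times n$ complex matrices, and let $C$ be a positive definite $n \times n$ complex matrix. Then for every $t \in \mathbb{R}$, the derivative of the function $t \mapsto \log \operatorname{tr}\left( C e^{H+tP} \right)$ at $t$ satisfies $\left| \frac{d}{dt} \log \operatorname{tr}\left( C e^{H+tP} \right) \right| \le \sup_{-1/2 \le s \le 1/2} \left\| e^{-s(H+tP)} \, P \, e^{s(H+tP)} \right\|$. -/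
open scoped Matrix.Norms.L2Operator ComplexOrder

open NormedSpace Matrix

namespace DerivLogTraceAux

variable {n : ℕ}

/-- Positive-definiteness is preserved under conjugation by an invertible matrix. -/
lemma posDef_conj {C B : Matrix (Fin n) (Fin n) ℂ} (hC : C.PosDef) (hB : IsUnit B) :
    (Bᴴ * C * B).PosDef := by
  exact (Matrix.IsUnit.posDef_star_left_conjugate_iff hB).mpr hC

/-- Diagonal entries of a positive definite matrix have positive real part. -/
lemma posDef_diag_re_pos {M : Matrix (Fin n) (Fin n) ℂ} (hM : M.PosDef) (i : Fin n) :
    0 < (M i i).re := by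
  have h := hM.re_dotProduct_pos (x := Pi.single i 1) (by
    intro h
    simpa using congr_fun h i)
  simpa [dotProduct, Matrix.mulVec, Pi.single_apply, Finset.sum_ite_eq,
    dotProduct_single, single_dotProduct] using h

/-- trace of a positive definite matrix has positive real part. -/
lemma posDef_trace_re_pos (hn : 1 ≤ n) {M : Matrix (Fin n) (Fin n) ℂ} (hM : M.PosDef) :
    0 < (Matrix.trace M).re := by
  have : (Matrix.trace M).re = ∑ i, (M i i).re := by
    simp [Matrix.trace, Matrix.diag, Complex.re_sum]
  rw [this]
  have : Nonempty (Fin n) := ⟨⟨0, hn⟩⟩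
  exact Finset.sum_pos (fun i _ => posDef_diag_re_pos hM i) Finset.univ_nonempty

open scoped MatrixOrder in
lemma exists_sqrt_aux {M : Matrix (Fin n) (Fin n) ℂ} (hM : M.PosSemidef) :
    ∃ N : Matrix (Fin n) (Fin n) ℂ, N * N = M ∧ N.IsHermitian := by
  have h0 : 0 ≤ M := Matrix.nonneg_iff_posSemidef.mpr hM
  exact ⟨CFC.sqrt M, CFC.sqrt_mul_sqrt_self M h0,
    (Matrix.nonneg_iff_posSemidef.mp (CFC.sqrt_nonneg M)).isHermitian⟩

/-- The key trace bound: for `M` positive semidefinite and any `X`,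
`|tr (M X)| ≤ ‖X‖ * re (tr M)` (with the `L2` operator norm). -/
lemma abs_trace_mul_le {M : Matrix (Fin n) (Fin n) ℂ} (hM : M.PosSemidef)
    (X : Matrix (Fin n) (Fin n) ℂ) :
    ‖Matrix.trace (M * X)‖ ≤ ‖X‖ * (Matrix.trace M).re := by
  classical
  obtain ⟨N, hNN, hNH⟩ := exists_sqrt_aux hM
  -- columns of N
  set v : Fin n → (Fin n → ℂ) := fun i j => N j i with hv
  have hstar : ∀ i j, star (N j i) = N i j := fun i j => hNH.apply i j
  have hdiag : ∀ i, (N * X * N) i i = dotProduct (star (v i)) (X *ᵥ (v i)) := by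
    intro i
    simp only [Matrix.mul_apply, dotProduct, Matrix.mulVec, Pi.star_apply, hv, hstar,
      Finset.sum_mul, Finset.mul_sum]
    rw [Finset.sum_comm]
    exact Finset.sum_congr rfl fun j _ => Finset.sum_congr rfl fun k _ => by ring
  have hMdiag : ∀ i, (M i i).re = Complex.re (dotProduct (star (v i)) (v i)) := by
    intro i
    rw [← hNN]
    simp only [Matrix.mul_apply, dotProduct, Pi.star_apply, hv, hstar]
  -- per-column bound via Cauchy-Schwarz in Euclidean space
  have hcol : ∀ i, ‖(N * X * N) i i‖ ≤ ‖X‖ * (M i i).re := by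
    intro i
    set w : EuclideanSpace ℂ (Fin n) := (WithLp.equiv 2 _).symm (v i) with hw
    have h1 : (N * X * N) i i = inner (𝕜 := ℂ) w ((WithLp.equiv 2 _).symm (X *ᵥ (v i))) := by
      rw [hdiag i, hw, WithLp.equiv_symm_apply,
        EuclideanSpace.inner_toLp_toLp, dotProduct_comm]
    have h2 : ‖(N * X * N) i i‖ ≤ ‖w‖ * ‖(WithLp.equiv 2 (Fin n → ℂ)).symm (X *ᵥ (v i))‖ := by
      rw [h1]
      simpa using norm_inner_le_norm (𝕜 := ℂ) w ((WithLp.equiv 2 _).symm (X *ᵥ (v i)))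
    have h3 : ‖(WithLp.equiv 2 (Fin n → ℂ)).symm (X *ᵥ (v i))‖ ≤ ‖X‖ * ‖w‖ := by
      have := Matrix.l2_opNorm_mulVec X w
      simpa [hw] using this
    have h4 : (M i i).re = ‖w‖ * ‖w‖ := by
      rw [hMdiag i]
      have : (inner (𝕜 := ℂ) w w).re = ‖w‖ * ‖w‖ := by
        rw [show (inner (𝕜 := ℂ) w w).re = RCLike.re (inner (𝕜 := ℂ) w w) from rfl,
          inner_self_eq_norm_mul_norm]
      rw [← this, hw, WithLp.equiv_symm_apply, EuclideanSpace.inner_toLp_toLp, dotProduct_comm]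
    calc ‖(N * X * N) i i‖ ≤ ‖w‖ * (‖X‖ * ‖w‖) :=
          h2.trans (by
            have hw0 : (0:ℝ) ≤ ‖w‖ := norm_nonneg _
            exact mul_le_mul_of_nonneg_left h3 hw0)
      _ = ‖X‖ * (M i i).re := by rw [h4]; ring
  -- assemble
  have htr : Matrix.trace (M * X) = Matrix.trace (N * X * N) := by
    rw [← hNN, Matrix.mul_assoc, Matrix.trace_mul_comm, Matrix.mul_assoc]
  rw [htr]
  have : ‖Matrix.trace (N * X * N)‖ ≤ ∑ i, ‖(N * X * N) i i‖ := by
    simpa [Matrix.trace, Matrix.diag] using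
      norm_sum_le Finset.univ (fun i => (N * X * N) i i)
  refine this.trans ?_
  have : (Matrix.trace M).re = ∑ i, (M i i).re := by
    simp [Matrix.trace, Matrix.diag, Complex.re_sum]
  rw [this, Finset.mul_sum]
  exact Finset.sum_le_sum fun i _ => hcol i

/-- Fundamental-theorem-of-calculus identity for differences of matrix exponentials. -/
lemma exp_sub_exp (M N : Matrix (Fin n) (Fin n) ℂ) :
    exp N - exp M =
      ∫ s in (0:ℝ)..1, exp (s • N) * (N - M) * exp ((1 - s) • M) := by
  have hderiv : ∀ s : ℝ,
      HasDerivAt (fun u : ℝ => exp (u • N) * exp ((1 - u) • M))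
        (exp (s • N) * (N - M) * exp ((1 - s) • M)) s := by
    intro s
    have h1 : HasDerivAt (fun u : ℝ => exp (u • N)) (exp (s • N) * N) s := by
      simpa using hasDerivAt_exp_smul_const (𝕂 := ℝ) N s
    have h3 : HasDerivAt (fun u : ℝ => exp (u • M)) (M * exp ((1 - s) • M)) (1 - s) := by
      simpa using hasDerivAt_exp_smul_const' (𝕂 := ℝ) M (1 - s)
    have h4 : HasDerivAt (fun u : ℝ => 1 - u) (-1 : ℝ) s := by
      simpa using (hasDerivAt_id s).const_sub 1
    have h2 : HasDerivAt (fun u : ℝ => exp ((1 - u) • M))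
        (-(M * exp ((1 - s) • M))) s := by
      have := h3.scomp s h4
      simpa [Function.comp_def] using this
    have := h1.mul h2
    exact this.congr_deriv (by noncomm_ring)
  have hcont : Continuous fun s : ℝ => exp (s • N) * (N - M) * exp ((1 - s) • M) := by
    have he : Continuous (exp : Matrix (Fin n) (Fin n) ℂ → _) := by
      let +nondep : NormedAlgebra ℚ (Matrix (Fin n) (Fin n) ℂ) := .restrictScalars ℚ ℂ _
      exact exp_continuous
    exact ((he.comp (continuous_id.smul continuous_const)).mul continuous_const).mul
      (he.comp ((continuous_const.sub continuous_id).smul continuous_const))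
  have := intervalIntegral.integral_eq_sub_of_hasDerivAt
    (f := fun u : ℝ => exp (u • N) * exp ((1 - u) • M))
    (fun s _ => hderiv s) (hcont.intervalIntegrable 0 1)
  rw [this]
  simp [exp_zero]

end DerivLogTraceAux

open DerivLogTraceAux in
/-- Pointwise derivative bound in the proof of part 2 of Lemma 3.3: for Hermitian `H, P` and
positive definite `C`, `|d/dt log tr(C e^{H+tP})| ≤ sup_{-1/2≤s≤1/2} ‖e^{-s(H+tP)} P e^{s(H+tP)}‖`. -/
theorem abs_deriv_log_trace_le {n : ℕ} (hn : 1 ≤ n)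
    (H P C : Matrix (Fin n) (Fin n) ℂ) (hH : H.IsHermitian) (hP : P.IsHermitian)
    (hC : C.PosDef) (t : ℝ) :
    |deriv (fun t : ℝ => Real.log (Matrix.trace (C * NormedSpace.exp (H + t • P))).re) t| ≤
      ⨆ s : Set.Icc (-(1/2) : ℝ) (1/2),
        ‖NormedSpace.exp ((-(s : ℝ)) • (H + t • P)) * P *
          NormedSpace.exp ((s : ℝ) • (H + t • P))‖ := by
  classical
  set A := H + t • P with hA
  set L := ⨆ s : Set.Icc (-(1/2) : ℝ) (1/2),
      ‖exp ((-(s : ℝ)) • A) * P * exp ((s : ℝ) • A)‖ with hL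
  -- the continuous linear functional X ↦ re (tr (C X))
  set T : Matrix (Fin n) (Fin n) ℂ →L[ℝ] ℝ :=
    LinearMap.toContinuousLinearMap
      (Complex.reLm.comp
        (((Matrix.traceLinearMap (Fin n) ℂ ℂ).restrictScalars ℝ).comp
          ((LinearMap.mulLeft ℂ C).restrictScalars ℝ))) with hT
  have hTapp : ∀ X, T X = (Matrix.trace (C * X)).re := fun X => rfl
  set g : ℝ → ℝ := fun u => (Matrix.trace (C * exp (H + u • P))).re with hg
  set G : ℝ → ℝ := fun u =>
    ∫ s in (0:ℝ)..1, T (exp (s • (H + u • P)) * P * exp ((1 - s) • A)) with hG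
  have hexpc : Continuous (exp : Matrix (Fin n) (Fin n) ℂ → _) := by
    let +nondep : NormedAlgebra ℚ (Matrix (Fin n) (Fin n) ℂ) := .restrictScalars ℚ ℂ _
    exact exp_continuous
  -- difference identity
  have hdiff : ∀ u : ℝ, g u - g t = (u - t) * G u := by
    intro u
    have hNM : (H + u • P) - A = (u - t) • P := by
      rw [hA]
      rw [sub_smul]
      abel
    have hint : IntervalIntegrable
        (fun s : ℝ => exp (s • (H + u • P)) * P * exp ((1 - s) • A))
        MeasureTheory.volume 0 1 := by
      refine Continuous.intervalIntegrable ?_ 0 1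
      exact ((hexpc.comp (continuous_id.smul continuous_const)).mul continuous_const).mul
        (hexpc.comp ((continuous_const.sub continuous_id).smul continuous_const))
    have hI := exp_sub_exp (n := n) A (H + u • P)
    rw [hNM] at hI
    have hI2 : exp (H + u • P) - exp A =
        (u - t) • ∫ s in (0:ℝ)..1, exp (s • (H + u • P)) * P * exp ((1 - s) • A) := by
      rw [hI, ← intervalIntegral.integral_smul]
      congr 1
      funext s
      simp [smul_mul_assoc, mul_smul_comm]
    have : g u - g t = T (exp (H + u • P) - exp A) := by
      rw [map_sub, hTapp, hTapp, hg, hA]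
    rw [this, hI2, ContinuousLinearMap.map_smul, smul_eq_mul]
    congr 1
    rw [← ContinuousLinearMap.intervalIntegral_comp_comm T hint]
  -- G is continuous
  have hGcont : Continuous G := by
    rw [hG]
    apply intervalIntegral.continuous_parametric_intervalIntegral_of_continuous'
    have : Continuous fun p : ℝ × ℝ =>
        exp (p.2 • (H + p.1 • P)) * P * exp ((1 - p.2) • A) := by
      refine Continuous.mul (Continuous.mul ?_ continuous_const) ?_
      · exact hexpc.comp (continuous_snd.smul
          (continuous_const.add (continuous_fst.smul continuous_const)))
      · exact hexpc.comp ((continuous_const.sub continuous_snd).smul continuous_const)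
    exact T.continuous.comp this
  -- derivative of g
  have hgderiv : HasDerivAt g (G t) t := by
    rw [hasDerivAt_iff_tendsto_slope]
    have heq : ∀ u ∈ {x : ℝ | x ≠ t}, slope g t u = G u := by
      intro u hu
      have hut : u - t ≠ 0 := sub_ne_zero.mpr hu
      rw [slope_def_field, div_eq_iff hut]
      rw [hdiff u]
      ring
    have hbase : Filter.Tendsto G (nhdsWithin t {x | x ≠ t}) (nhds (G t)) :=
      (hGcont.continuousAt.tendsto).mono_left nhdsWithin_le_nhds
    refine hbase.congr' ?_
    filter_upwards [self_mem_nhdsWithin] with u hu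
    exact (heq u hu).symm
  -- positivity of g t
  set B := exp ((1/2 : ℝ) • A) with hB
  have hAH : A.IsHermitian := by
    rw [hA]
    refine hH.add ?_
    show (t • P)ᴴ = t • P
    rw [Matrix.conjTranspose_smul, hP.eq, star_trivial]
  have hBH : B.IsHermitian := by
    rw [hB]
    show (exp ((1/2 : ℝ) • A))ᴴ = exp ((1/2 : ℝ) • A)
    have h12 : ((1/2 : ℝ) • A)ᴴ = (1/2 : ℝ) • A := by
      rw [Matrix.conjTranspose_smul, hAH.eq, star_trivial]
    rw [← Matrix.star_eq_conjTranspose, star_exp, Matrix.star_eq_conjTranspose, h12]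
  have hBunit : IsUnit B := hB ▸ Matrix.isUnit_exp ((1/2 : ℝ) • A)
  have hBB : B * B = exp A := by
    rw [hB, ← Matrix.exp_add_of_commute _ _ (((Commute.refl A).smul_left _).smul_right _)]
    congr 1
    rw [← add_smul]
    norm_num
  set M := Bᴴ * C * B with hM
  have hMposdef : M.PosDef := posDef_conj hC hBunit
  have hMtr : Matrix.trace M = Matrix.trace (C * exp A) := by
    rw [hM, hBH.eq, Matrix.trace_mul_comm, ← Matrix.mul_assoc, ← hBB, Matrix.mul_assoc,
      ← Matrix.mul_assoc, Matrix.trace_mul_comm]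
  have hgt : g t = (Matrix.trace M).re := by
    rw [hMtr]
  have hgtpos : 0 < g t := by
    rw [hgt]
    exact posDef_trace_re_pos hn hMposdef
  -- boundedness of the sup family
  have hbdd : BddAbove (Set.range fun s : Set.Icc (-(1/2) : ℝ) (1/2) =>
      ‖exp ((-(s : ℝ)) • A) * P * exp ((s : ℝ) • A)‖) := by
    haveI : CompactSpace (Set.Icc (-(1/2) : ℝ) (1/2)) :=
      isCompact_iff_compactSpace.mp isCompact_Icc
    refine (isCompact_range ?_).bddAbove
    have hcoe : Continuous fun s : Set.Icc (-(1/2) : ℝ) (1/2) => (s : ℝ) :=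
      continuous_subtype_val
    exact (((hexpc.comp ((hcoe.neg).smul continuous_const)).mul continuous_const).mul
      (hexpc.comp (hcoe.smul continuous_const))).norm
  -- bound on |G t|
  have hGbound : |G t| ≤ L * g t := by
    have h1 : |G t| ≤ L * g t * |(1:ℝ) - 0| := by
      show ‖∫ s in (0:ℝ)..1, T (exp (s • (H + t • P)) * P * exp ((1 - s) • A))‖ ≤
        L * g t * |(1:ℝ) - 0|
      refine intervalIntegral.norm_integral_le_of_norm_le_const ?_
      intro s hs
      rw [Set.uIoc_of_le (by norm_num : (0:ℝ) ≤ 1)] at hs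
      -- s ∈ Ioc 0 1
      have hs0 : 0 < s := hs.1
      have hs1 : s ≤ 1 := hs.2
      set u : ℝ := s - 1/2 with hu
      have humem : -u ∈ Set.Icc (-(1/2) : ℝ) (1/2) := by
        simp only [Set.mem_Icc, hu]
        constructor <;> linarith
      set X := exp (u • A) * P * exp ((-u) • A) with hX
      have hBX : B * exp (u • A) = exp (s • A) := by
        rw [hB, ← Matrix.exp_add_of_commute _ _ (((Commute.refl A).smul_left _).smul_right _),
          ← add_smul]
        congr 2
        rw [hu]; ring
      have hXB : exp ((-u) • A) * B = exp ((1 - s) • A) := by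
        rw [hB, ← Matrix.exp_add_of_commute _ _ (((Commute.refl A).smul_left _).smul_right _),
          ← add_smul]
        congr 2
        rw [hu]; ring
      have hfact : exp (s • A) * P * exp ((1 - s) • A) = B * X * B := by
        rw [hX, ← hBX, ← hXB]
        noncomm_ring
      have hTval : T (exp (s • (H + t • P)) * P * exp ((1 - s) • A)) =
          (Matrix.trace (M * X)).re := by
        have htr2 : Matrix.trace (C * (B * X * B)) = Matrix.trace (M * X) := by
          rw [hM, hBH.eq, show C * (B * X * B) = (C * B * X) * B from by noncomm_ring,
            Matrix.trace_mul_comm, show B * (C * B * X) = (B * C * B) * X from by noncomm_ring]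
        rw [hTapp, ← hA, hfact, ← Matrix.mul_assoc, Matrix.mul_assoc, htr2]
      have hXle : ‖X‖ ≤ L := by
        rw [hL, hX]
        have := le_ciSup hbdd (⟨-u, humem⟩ : Set.Icc (-(1/2) : ℝ) (1/2))
        simpa [neg_neg] using this
      have habs : ‖T (exp (s • (H + t • P)) * P * exp ((1 - s) • A))‖ ≤ ‖X‖ * g t := by
        rw [hTval, Real.norm_eq_abs, hgt]
        exact (Complex.abs_re_le_norm _).trans (abs_trace_mul_le hMposdef.posSemidef X)
      refine habs.trans ?_
      exact mul_le_mul_of_nonneg_right hXle (le_of_lt hgtpos) |>.trans_eq rfl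
    simpa using h1
  -- conclude
  have hlog : HasDerivAt (fun u : ℝ => Real.log (g u)) (G t / g t) t :=
    hgderiv.log (ne_of_gt hgtpos)
  have hderiv_eq : deriv (fun u : ℝ =>
      Real.log (Matrix.trace (C * exp (H + u • P))).re) t = G t / g t :=
    hlog.deriv
  rw [hderiv_eq, abs_div, abs_of_pos hgtpos, div_le_iff₀ hgtpos]
  calc |G t| ≤ L * g t := hGbound
    _ = L * g t := rfl
end

section
/- Fix $d \ge 1$ and let $w$ be a function from the finite subsets of $\mathbb{Z}^d$ to the nonnegative reals that is translation invariant, i.e., $w(X + x) = w(X)$ for every finite $X \subset \mathbb{Z}^d$ and every $x \in \mathbb{Z}^d$ (where $X + x = \{ y + x : y \in X \}$), and summable in the sense that the family $\{ w(X) : X \text{ finite}, \, 0 \in X \}$ is summable with sum $S < \infty$. For $a \ge 1$ let $\Delta_a = \{0, 1, \dots, a-1\}^d \subset \mathbb{Z}^d$. Then $\lim_{a \to \infty} \frac{1}{a^d} \sum_{X : \, X \cap \Delta_a \ne \emptyset, \; X \not\subset \Delta_a} w(X) = 0$, the sum being over finite subsets $X$ of $\mathbb{Z}^d$ that meet both $\Delta_a$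 and its complement (this family is summable, being dominated by $a^d S$). -/
open Filter Finset Topology

namespace BoundaryAux

variable {d : ℕ}

noncomputable abbrev cube (d a : ℕ) : Finset (Fin d → ℤ) :=
  Fintype.piFinset (fun _ : Fin d => Finset.Ico (0 : ℤ) (a : ℤ))

noncomputable abbrev inner' (d R a : ℕ) : Finset (Fin d → ℤ) :=
  Fintype.piFinset (fun _ : Fin d => Finset.Icc (R : ℤ) ((a : ℤ) - 1 - R))

lemma image_add_zero (X : Finset (Fin d → ℤ)) :
    X.image (fun y => y + (0 : Fin d → ℤ)) = X := by
  simp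

lemma image_add_add (X : Finset (Fin d → ℤ)) (c e : Fin d → ℤ) :
    (X.image (fun y => y + c)).image (fun y => y + e) = X.image (fun y => y + (c + e)) := by
  rw [Finset.image_image]
  congr 1
  funext y
  simp [Function.comp, add_assoc]

lemma summable_restrict {α : Type*} {w : α → ℝ} {p q : α → Prop}
    (hpq : ∀ a, p a → q a) (hq : Summable fun x : {a // q a} => w x.1) :
    Summable fun x : {a // p a} => w x.1 :=
  hq.comp_injective (i := fun x : {a // p a} => (⟨x.1, hpq _ x.2⟩ : {a // q a}))
    (fun x y h => by
      have h2 := congrArg Subtype.val h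
      exact Subtype.ext h2)

lemma tsum_restrict_le {α : Type*} {w : α → ℝ} (hw : ∀ a, 0 ≤ w a) {p q : α → Prop}
    (hpq : ∀ a, p a → q a) (hq : Summable fun x : {a // q a} => w x.1) :
    ∑' x : {a // p a}, w x.1 ≤ ∑' x : {a // q a}, w x.1 :=
  Summable.tsum_le_tsum_of_inj (fun x : {a // p a} => (⟨x.1, hpq _ x.2⟩ : {a // q a}))
    (fun x y h => by
      have h2 := congrArg Subtype.val h
      exact Subtype.ext h2)
    (fun c _ => hw c) (fun _ => le_rfl) (summable_restrict hpq hq) hq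

lemma cube_card (d a : ℕ) : (cube d a).card = a ^ d := by
  rw [Fintype.card_piFinset]
  simp [Int.card_Ico]

lemma inner'_card (d R a : ℕ) (h : 2 * R ≤ a) :
    (((inner' d R a).card : ℝ)) = ((a : ℝ) - 2 * R) ^ d := by
  have hz : (0 : ℤ) ≤ (a : ℤ) - 2 * R := by
    have : (2 * R : ℤ) ≤ (a : ℤ) := by exact_mod_cast h
    omega
  have hIcc : ((a : ℤ) - 1 - R + 1 - R) = (a : ℤ) - 2 * R := by ring
  rw [Fintype.card_piFinset]
  simp only [Int.card_Icc, hIcc]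
  rw [Finset.prod_const, Finset.card_univ, Fintype.card_fin]
  have h2 : ((((a : ℤ) - 2 * R).toNat : ℕ) : ℝ) = (a : ℝ) - 2 * R := by
    have h3 : ((((a : ℤ) - 2 * R).toNat : ℕ) : ℤ) = (a : ℤ) - 2 * R :=
      Int.toNat_of_nonneg hz
    have h4 := congrArg (fun z : ℤ => (z : ℝ)) h3
    push_cast at h4 ⊢
    exact h4
  push_cast
  rw [h2]

lemma key (d : ℕ) (w : Finset (Fin d → ℤ) → ℝ) (hw0 : ∀ X, 0 ≤ w X)
    (hwt : ∀ (X : Finset (Fin d → ℤ)) (x : Fin d → ℤ),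
      w (X.image (fun y => y + x)) = w X)
    (S : ℝ)
    (hsum : HasSum (fun X : {X : Finset (Fin d → ℤ) // (0 : Fin d → ℤ) ∈ X} => w X.1) S)
    (F : Finset {X : Finset (Fin d → ℤ) // (0 : Fin d → ℤ) ∈ X}) (R : ℕ)
    (hR : ∀ Z ∈ F, ∀ y ∈ Z.1, ∀ i, (y i).natAbs ≤ R) (a : ℕ) :
    (∑' X : {X : Finset (Fin d → ℤ) //
        (X ∩ cube d a).Nonempty ∧ ¬ X ⊆ cube d a}, w X.1) ≤
      ((cube d a).card : ℝ) *
        (∑' Z : {Z : {X : Finset (Fin d → ℤ) // (0 : Fin d → ℤ) ∈ X} // Z ∉ F}, w Z.1.1)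
      + (((cube d a).card : ℝ) - ((inner' d R a).card : ℝ)) * S := by
  classical
  set Δ : Finset (Fin d → ℤ) := cube d a with hΔ
  set C := ∑' Z : {Z : {X : Finset (Fin d → ℤ) // (0 : Fin d → ℤ) ∈ X} // Z ∉ F}, w Z.1.1
    with hCdef
  have hC0 : 0 ≤ C := tsum_nonneg fun _ => hw0 _
  have hS0 : 0 ≤ S := hsum.tsum_eq ▸ tsum_nonneg fun _ => hw0 _
  set P : (Fin d → ℤ) → Finset (Fin d → ℤ) → Prop :=
    fun x Y => (0 : Fin d → ℤ) ∈ Y ∧ ¬ Y.image (fun y => y + x) ⊆ Δ with hPdef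
  have hfib : ∀ x : Fin d → ℤ, Summable fun Y : {Y // P x Y} => w Y.1 := fun x =>
    summable_restrict (q := fun Y => (0 : Fin d → ℤ) ∈ Y) (fun Y h => h.1) hsum.summable
  have hG0 : ∀ x : Fin d → ℤ, 0 ≤ ∑' Y : {Y // P x Y}, w Y.1 :=
    fun x => tsum_nonneg fun _ => hw0 _
  have hGS : ∀ x : Fin d → ℤ, (∑' Y : {Y // P x Y}, w Y.1) ≤ S := by
    intro x
    calc (∑' Y : {Y // P x Y}, w Y.1)
        ≤ ∑' Y : {Y : Finset (Fin d → ℤ) // (0 : Fin d → ℤ) ∈ Y}, w Y.1 :=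
          tsum_restrict_le hw0 (fun Y h => h.1) hsum.summable
      _ = S := hsum.tsum_eq
  have hGC : ∀ x ∈ inner' d R a, (∑' Y : {Y // P x Y}, w Y.1) ≤ C := by
    intro x hx
    have hxmem : ∀ i, (R : ℤ) ≤ x i ∧ x i ≤ (a : ℤ) - 1 - R := by
      intro i
      have := (Fintype.mem_piFinset.1 hx) i
      simpa [Finset.mem_Icc] using this
    have hsub : ∀ Z : {X : Finset (Fin d → ℤ) // (0 : Fin d → ℤ) ∈ X}, Z ∈ F →
        Z.1.image (fun y => y + x) ⊆ Δ := by
      intro Z hZ z hz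
      rcases Finset.mem_image.1 hz with ⟨y, hy, rfl⟩
      refine Fintype.mem_piFinset.2 fun i => ?_
      have h1 := hR Z hZ y hy i
      obtain ⟨h2a, h2b⟩ := hxmem i
      simp only [Finset.mem_Ico, Pi.add_apply]
      omega
    exact Summable.tsum_le_tsum_of_inj
      (fun Y : {Y // P x Y} =>
        (⟨⟨Y.1, Y.2.1⟩, fun hmem => Y.2.2 (hsub _ hmem)⟩ :
          {Z : {X : Finset (Fin d → ℤ) // (0 : Fin d → ℤ) ∈ X} // Z ∉ F}))
      (fun Y₁ Y₂ h => Subtype.ext (congrArg (fun Z => Z.1.1) h))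
      (fun c _ => hw0 _) (fun _ => le_rfl) (hfib x)
      (hsum.summable.comp_injective Subtype.val_injective)
  -- the sigma type
  have hg : Summable (fun p : Σ x : {x // x ∈ Δ}, {Y // P x.1 Y} => w p.2.1) :=
    (summable_sigma_of_nonneg (fun p => hw0 _)).2
      ⟨fun x => hfib x.1, Summable.of_finite⟩
  -- injection from boundary-crossing sets into the sigma type
  have hB : (∑' X : {X : Finset (Fin d → ℤ) // (X ∩ Δ).Nonempty ∧ ¬ X ⊆ Δ}, w X.1)
      ≤ ∑' p : Σ x : {x // x ∈ Δ}, {Y // P x.1 Y}, w p.2.1 := by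
    have mk0 : ∀ X : {X : Finset (Fin d → ℤ) // (X ∩ Δ).Nonempty ∧ ¬ X ⊆ Δ},
        X.2.1.choose ∈ X.1 ∧ X.2.1.choose ∈ Δ := fun X =>
      Finset.mem_inter.1 X.2.1.choose_spec
    set i : {X : Finset (Fin d → ℤ) // (X ∩ Δ).Nonempty ∧ ¬ X ⊆ Δ} →
        Σ x : {x // x ∈ Δ}, {Y // P x.1 Y} := fun X =>
      ⟨⟨X.2.1.choose, (mk0 X).2⟩,
       ⟨X.1.image (fun y => y + (-X.2.1.choose)),
        Finset.mem_image.2 ⟨X.2.1.choose, (mk0 X).1, by simp⟩,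
        by
          rw [image_add_add]
          simpa using X.2.2⟩⟩ with hidef
    have hinj : Function.Injective i := by
      intro X₁ X₂ h
      have h' := congrArg
        (fun p : Σ x : {x // x ∈ Δ}, {Y // P x.1 Y} =>
          p.2.1.image (fun y => y + p.1.1)) h
      simp only [hidef, image_add_add, neg_add_cancel, image_add_zero] at h'
      exact Subtype.ext (by
        have hrec : ∀ X, (i X).2.1.image (fun y => y + (i X).1.1) = X.1 := fun X => by
          show (X.1.image (fun y => y + (-X.2.1.choose))).image (fun y => y + X.2.1.choose) = X.1
          rw [image_add_add, neg_add_cancel, image_add_zero]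
        rw [← hrec X₁, ← hrec X₂, h])
    have hle : ∀ X : {X : Finset (Fin d → ℤ) // (X ∩ Δ).Nonempty ∧ ¬ X ⊆ Δ},
        w X.1 ≤ w ((i X).2.1) := fun X => le_of_eq (hwt X.1 (-X.2.1.choose)).symm
    have hfsum : Summable
        (fun X : {X : Finset (Fin d → ℤ) // (X ∩ Δ).Nonempty ∧ ¬ X ⊆ Δ} => w X.1) :=
      ((hg.comp_injective hinj).congr (fun X => hwt X.1 (-X.2.1.choose)))
    exact Summable.tsum_le_tsum_of_inj i hinj (fun c _ => hw0 _) hle hfsum hg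
  have hsig : (∑' p : Σ x : {x // x ∈ Δ}, {Y // P x.1 Y}, w p.2.1)
      = ∑ x ∈ Δ, ∑' Y : {Y // P x Y}, w Y.1 := by
    rw [Summable.tsum_sigma hg, tsum_fintype]
    exact Finset.sum_coe_sort Δ (fun z => ∑' Y : {Y // P z Y}, w Y.1)
  have hsubΔ : inner' d R a ⊆ Δ := by
    intro x hx
    have h1 := Fintype.mem_piFinset.1 hx
    refine Fintype.mem_piFinset.2 fun i => ?_
    have := h1 i
    simp only [Finset.mem_Icc] at this
    simp only [Finset.mem_Ico]
    omega
  have hcard : (inner' d R a).card ≤ Δ.card := Finset.card_le_card hsubΔ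
  have hsplit : (∑ x ∈ Δ, ∑' Y : {Y // P x Y}, w Y.1)
      = (∑ x ∈ Δ \ inner' d R a, ∑' Y : {Y // P x Y}, w Y.1)
        + ∑ x ∈ inner' d R a, ∑' Y : {Y // P x Y}, w Y.1 :=
    (Finset.sum_sdiff hsubΔ).symm
  have h1 : (∑ x ∈ inner' d R a, ∑' Y : {Y // P x Y}, w Y.1) ≤ (Δ.card : ℝ) * C := by
    calc (∑ x ∈ inner' d R a, ∑' Y : {Y // P x Y}, w Y.1)
        ≤ ∑ _x ∈ inner' d R a, C := Finset.sum_le_sum (fun x hx => hGC x hx)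
      _ = ((inner' d R a).card : ℝ) * C := by rw [Finset.sum_const, nsmul_eq_mul]
      _ ≤ (Δ.card : ℝ) * C :=
          mul_le_mul_of_nonneg_right (by exact_mod_cast hcard) hC0
  have h2 : (∑ x ∈ Δ \ inner' d R a, ∑' Y : {Y // P x Y}, w Y.1)
      ≤ ((Δ.card : ℝ) - ((inner' d R a).card : ℝ)) * S := by
    calc (∑ x ∈ Δ \ inner' d R a, ∑' Y : {Y // P x Y}, w Y.1)
        ≤ ∑ _x ∈ Δ \ inner' d R a, S := Finset.sum_le_sum (fun x _ => hGS x)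
      _ = (((Δ \ inner' d R a).card : ℕ) : ℝ) * S := by rw [Finset.sum_const, nsmul_eq_mul]
      _ = ((Δ.card : ℝ) - ((inner' d R a).card : ℝ)) * S := by
          rw [Finset.card_sdiff_of_subset hsubΔ, Nat.cast_sub hcard]
  calc (∑' X : {X : Finset (Fin d → ℤ) // (X ∩ Δ).Nonempty ∧ ¬ X ⊆ Δ}, w X.1)
      ≤ ∑' p : Σ x : {x // x ∈ Δ}, {Y // P x.1 Y}, w p.2.1 := hB
    _ = ∑ x ∈ Δ, ∑' Y : {Y // P x Y}, w Y.1 := hsig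
    _ = (∑ x ∈ Δ \ inner' d R a, ∑' Y : {Y // P x Y}, w Y.1)
        + ∑ x ∈ inner' d R a, ∑' Y : {Y // P x Y}, w Y.1 := hsplit
    _ ≤ ((Δ.card : ℝ) - ((inner' d R a).card : ℝ)) * S + (Δ.card : ℝ) * C :=
        add_le_add h2 h1
    _ = (Δ.card : ℝ) * C + ((Δ.card : ℝ) - ((inner' d R a).card : ℝ)) * S := by ring

end BoundaryAux

open BoundaryAux Filter Topology

/-- Boundary-term estimate (3.46): if `w` is a translation-invariant nonnegative weight on
finite subsets of `ℤ^d` that is summable over the sets containing the origin, then the total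
weight of the sets crossing the boundary of the cube `Δ_a = {0, …, a-1}^d` is `o(a^d)`. -/
theorem boundary_weight_tendsto_zero (d : ℕ) (hd : 1 ≤ d)
    (w : Finset (Fin d → ℤ) → ℝ) (hw_nonneg : ∀ X, 0 ≤ w X)
    (hw_transl : ∀ (X : Finset (Fin d → ℤ)) (x : Fin d → ℤ),
      w (X.image (fun y => y + x)) = w X)
    (S : ℝ)
    (hsum : HasSum (fun X : {X : Finset (Fin d → ℤ) // (0 : Fin d → ℤ) ∈ X} => w X) S) :
    Filter.Tendsto
      (fun a : ℕ =>
        (1 / (a : ℝ) ^ d) *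
          ∑' X : {X : Finset (Fin d → ℤ) //
              (X ∩ Fintype.piFinset (fun _ : Fin d => Finset.Ico (0 : ℤ) (a : ℤ))).Nonempty ∧
              ¬ X ⊆ Fintype.piFinset (fun _ : Fin d => Finset.Ico (0 : ℤ) (a : ℤ))}, w X)
      Filter.atTop (nhds 0) := by
  classical
  rw [NormedAddCommGroup.tendsto_nhds_zero]
  intro ε hε
  obtain ⟨F, hF⟩ :
      ∃ F : Finset {X : Finset (Fin d → ℤ) // (0 : Fin d → ℤ) ∈ X},
        (∑' Z : {Z : {X : Finset (Fin d → ℤ) // (0 : Fin d → ℤ) ∈ X} // Z ∉ F}, w Z.1.1)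
          < ε / 2 := by
    have h := (tendsto_order.1 (tendsto_tsum_compl_atTop_zero
      (fun X : {X : Finset (Fin d → ℤ) // (0 : Fin d → ℤ) ∈ X} => w X.1))).2 (ε / 2)
      (by positivity)
    exact h.exists
  set C := ∑' Z : {Z : {X : Finset (Fin d → ℤ) // (0 : Fin d → ℤ) ∈ X} // Z ∉ F}, w Z.1.1
    with hCdef
  have hC0 : 0 ≤ C := tsum_nonneg fun _ => hw_nonneg _
  set R := F.sup (fun Z => Z.1.sup (fun y => Finset.univ.sup (fun i => (y i).natAbs)))
    with hRdef
  have hR : ∀ Z ∈ F, ∀ y ∈ Z.1, ∀ i, (y i).natAbs ≤ R := by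
    intro Z hZ y hy i
    calc (y i).natAbs
        ≤ Finset.univ.sup (fun i => (y i).natAbs) :=
          Finset.le_sup (f := fun i : Fin d => (y i).natAbs) (Finset.mem_univ i)
      _ ≤ Z.1.sup (fun y => Finset.univ.sup (fun i => (y i).natAbs)) :=
          Finset.le_sup (f := fun y : Fin d → ℤ =>
            Finset.univ.sup (fun i => (y i).natAbs)) hy
      _ ≤ R := Finset.le_sup
          (f := fun Z : {X : Finset (Fin d → ℤ) // (0 : Fin d → ℤ) ∈ X} =>
            Z.1.sup (fun y => Finset.univ.sup (fun i => (y i).natAbs))) hZ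
  have hS0 : 0 ≤ S := hsum.tsum_eq ▸ tsum_nonneg fun _ => hw_nonneg _
  have hlim : Tendsto (fun a : ℕ => C + (1 - (1 - 2 * (R : ℝ) / (a : ℝ)) ^ d) * S)
      atTop (𝓝 C) := by
    have h1 : Tendsto (fun a : ℕ => 2 * (R : ℝ) / (a : ℝ)) atTop (𝓝 0) :=
      tendsto_const_div_atTop_nhds_zero_nat _
    have h2 : Tendsto (fun a : ℕ => (1 - 2 * (R : ℝ) / (a : ℝ)) ^ d) atTop (𝓝 1) := by
      have := (tendsto_const_nhds (x := (1 : ℝ)).sub h1).pow d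
      simpa using this
    have h3 : Tendsto (fun a : ℕ => (1 - (1 - 2 * (R : ℝ) / (a : ℝ)) ^ d) * S)
        atTop (𝓝 0) := by
      have := (tendsto_const_nhds (x := (1 : ℝ)).sub h2).mul_const S
      simpa using this
    simpa using (tendsto_const_nhds (x := C)).add h3
  have hev1 := (tendsto_order.1 hlim).2 ε (by linarith)
  filter_upwards [hev1, eventually_ge_atTop (max 1 (2 * R))] with a hha haa
  have ha1 : 1 ≤ a := le_trans (le_max_left _ _) haa
  have ha2 : 2 * R ≤ a := le_trans (le_max_right _ _) haa
  have hapos : (0 : ℝ) < (a : ℝ) := by exact_mod_cast ha1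
  have hB0 : (0 : ℝ) ≤
      ∑' X : {X : Finset (Fin d → ℤ) //
          (X ∩ Fintype.piFinset (fun _ : Fin d => Finset.Ico (0 : ℤ) (a : ℤ))).Nonempty ∧
          ¬ X ⊆ Fintype.piFinset (fun _ : Fin d => Finset.Ico (0 : ℤ) (a : ℤ))}, w X :=
    tsum_nonneg fun _ => hw_nonneg _
  have hterm0 : (0 : ℝ) ≤ (1 / (a : ℝ) ^ d) *
      ∑' X : {X : Finset (Fin d → ℤ) //
          (X ∩ Fintype.piFinset (fun _ : Fin d => Finset.Ico (0 : ℤ) (a : ℤ))).Nonempty ∧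
          ¬ X ⊆ Fintype.piFinset (fun _ : Fin d => Finset.Ico (0 : ℤ) (a : ℤ))}, w X :=
    mul_nonneg (by positivity) hB0
  rw [Real.norm_of_nonneg hterm0]
  have hkey := BoundaryAux.key d w hw_nonneg hw_transl S hsum F R hR a
  have hchain : (1 / (a : ℝ) ^ d) *
      (∑' X : {X : Finset (Fin d → ℤ) //
          (X ∩ Fintype.piFinset (fun _ : Fin d => Finset.Ico (0 : ℤ) (a : ℤ))).Nonempty ∧
          ¬ X ⊆ Fintype.piFinset (fun _ : Fin d => Finset.Ico (0 : ℤ) (a : ℤ))}, w X)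
      ≤ C + (1 - (1 - 2 * (R : ℝ) / (a : ℝ)) ^ d) * S := by
    calc (1 / (a : ℝ) ^ d) *
        (∑' X : {X : Finset (Fin d → ℤ) //
            (X ∩ Fintype.piFinset (fun _ : Fin d => Finset.Ico (0 : ℤ) (a : ℤ))).Nonempty ∧
            ¬ X ⊆ Fintype.piFinset (fun _ : Fin d => Finset.Ico (0 : ℤ) (a : ℤ))}, w X)
        ≤ (1 / (a : ℝ) ^ d) *
            (((cube d a).card : ℝ) * C
              + (((cube d a).card : ℝ) - ((inner' d R a).card : ℝ)) * S) :=
          mul_le_mul_of_nonneg_left hkey (by positivity)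
      _ = C + (1 - (1 - 2 * (R : ℝ) / (a : ℝ)) ^ d) * S := by
          rw [cube_card, inner'_card d R a ha2]
          have hane : (a : ℝ) ≠ 0 := ne_of_gt hapos
          have hdiv : (1 : ℝ) - 2 * (R : ℝ) / (a : ℝ) = ((a : ℝ) - 2 * R) / (a : ℝ) := by
            field_simp
          rw [hdiv, div_pow]
          have hpd : ((a : ℝ)) ^ d ≠ 0 := pow_ne_zero _ hane
          push_cast
          field_simp
  exact lt_of_le_of_lt hchain hha
end
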